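/- Let μ and ν be compactly supported probability measures on ℝ with moments m^μ_k = ∫ x^k dμ and m^ν_k = ∫ x^k dν, let p, q ∈ ℝ[x], and define Q : ℝ[x] → ℝ[x] by Q[f] = p · L_ν[L_μ[f]] + q · L_μ[f]. If Q has a polynomial system of eigenfunctions, then deg q ≤ 1 and deg p ≤ 2, and writing p(x) = a + b x + c x², q(x) = d + e x, one has, for every n ≥ 1, a Σ_{i+j=n−2} m^μ_i m^ν_j + b Σ_{i+j=n−1} m^μ_i m^ν_j + c Σ_{i+j=n} m^μ_i m^ν_j + d m^μ_{n−1} + e m^μ_n = 0 (sums over i, j ≥ 0; empty sums are 0); equivalently, (a z² + b z + c) M_μ(z) M_ν(z) + (d z + e) M_μ(z) = c + e as formal power series, where M_μ(z) = Σ m^μ_n z^n and M_ν(z) = Σ m^ν_n z^n. -/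

import Mathlib

open MeasureTheory Polynomial

/-- Moments of a measure on ℝ. -/
noncomputable def mom (ρ : Measure ℝ) (k : ℕ) : ℝ := ∫ x, x ^ k ∂ρ

/-- The operator `L_ρ` on polynomials, defined via the moment sequence `m` of `ρ`:
`L[x^n] = Σ_{k=0}^{n-1} m_{n-1-k} x^k`. -/
noncomputable def Lop (m : ℕ → ℝ) (f : Polynomial ℝ) : Polynomial ℝ :=
  f.sum fun n a => C a * ∑ k ∈ Finset.range n, C (m (n - 1 - k)) * X ^ k

/-- A measure has compact support. -/
def CompactSupp (μ : Measure ℝ) : Prop := ∃ K : Set ℝ, IsCompact K ∧ μ Kᶜ = 0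

/-- A polynomial system of eigenfunctions for an operator on polynomials. -/
def HasPolyEigenfunctions (Q : Polynomial ℝ → Polynomial ℝ) : Prop :=
  ∃ (P : ℕ → Polynomial ℝ) (lam : ℕ → ℝ),
    (∀ n, (P n).degree = (n : WithBot ℕ)) ∧ (∀ n, Q (P n) = lam n • P n)

lemma Lop_coeff (m : ℕ → ℝ) (f : Polynomial ℝ) (j : ℕ) :
    (Lop m f).coeff j = ∑ n ∈ Finset.Ioc j f.natDegree, f.coeff n * m (n - 1 - j) := by
  rw [Lop, Polynomial.sum_def, Polynomial.finset_sum_coeff]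
  have step : ∀ n ∈ f.support,
      (C (f.coeff n) * ∑ k ∈ Finset.range n, C (m (n - 1 - k)) * X ^ k).coeff j
      = if j < n then f.coeff n * m (n - 1 - j) else 0 := by
    intro n _
    rw [coeff_C_mul, Polynomial.finset_sum_coeff]
    simp only [coeff_C_mul, coeff_X_pow]
    have : ∀ k ∈ Finset.range n, m (n - 1 - k) * (if j = k then (1:ℝ) else 0)
        = if k = j then m (n - 1 - k) else 0 := by
      intro k _
      by_cases h : j = k <;> simp [h, eq_comm]
    rw [Finset.sum_congr rfl this, Finset.sum_ite_eq' (Finset.range n) j (fun k => m (n - 1 - k))]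
    simp [Finset.mem_range, mul_ite]
  rw [Finset.sum_congr rfl step]
  rw [← Finset.sum_filter]
  apply Finset.sum_subset
  · intro n hn
    simp only [Finset.mem_filter, Polynomial.mem_support_iff] at hn
    simp only [Finset.mem_Ioc]
    exact ⟨hn.2, Polynomial.le_natDegree_of_ne_zero hn.1⟩
  · intro n hn hn'
    simp only [Finset.mem_filter, Polynomial.mem_support_iff, not_and_or, not_not] at hn'
    simp only [Finset.mem_Ioc] at hn
    rcases hn' with h | h
    · rw [h, zero_mul]
    · exact absurd hn.1 h

lemma Lop_coeff_zero (m : ℕ → ℝ) (f : Polynomial ℝ) {j : ℕ} (h : f.natDegree ≤ j) :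
    (Lop m f).coeff j = 0 := by
  rw [Lop_coeff, Finset.Ioc_eq_empty (by omega), Finset.sum_empty]

lemma Lop_eq_zero (m : ℕ → ℝ) (f : Polynomial ℝ) (h : f.natDegree = 0) :
    Lop m f = 0 := by
  ext j; rw [Lop_coeff_zero m f (by omega), coeff_zero]

lemma Lop_coeff_top (m : ℕ → ℝ) (f : Polynomial ℝ) (h : 1 ≤ f.natDegree) :
    (Lop m f).coeff (f.natDegree - 1) = f.coeff f.natDegree * m 0 := by
  rw [Lop_coeff]
  have : Finset.Ioc (f.natDegree - 1) f.natDegree = {f.natDegree} := by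
    ext k; simp [Finset.mem_Ioc]; omega
  rw [this, Finset.sum_singleton]
  congr 1
  congr 1
  omega

lemma Lop_add (m : ℕ → ℝ) (f g : Polynomial ℝ) :
    Lop m (f + g) = Lop m f + Lop m g := by
  unfold Lop
  apply Polynomial.sum_add_index
  · intro n; simp
  · intro n a b; rw [C_add, add_mul]

lemma Lop_C_mul (m : ℕ → ℝ) (r : ℝ) (f : Polynomial ℝ) :
    Lop m (C r * f) = C r * Lop m f := by
  by_cases hr : r = 0
  · simp [hr, Lop, Polynomial.sum_zero_index]
  · ext j
    rw [Polynomial.coeff_C_mul, Lop_coeff, Lop_coeff, Finset.mul_sum,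
      Polynomial.natDegree_C_mul hr]
    exact Finset.sum_congr rfl fun n _ => by rw [Polynomial.coeff_C_mul, mul_assoc]

lemma Lop_nd (m : ℕ → ℝ) (hm0 : m 0 = 1) (f : Polynomial ℝ) {n : ℕ} (hn : 1 ≤ n)
    (hfn : f.natDegree = n) (hlc : f.coeff n ≠ 0) :
    (Lop m f).natDegree = n - 1 ∧ (Lop m f).coeff (n - 1) = f.coeff n := by
  have htop : (Lop m f).coeff (n - 1) = f.coeff n := by
    have := Lop_coeff_top m f (by omega)
    rw [hfn] at this
    rw [this, hm0, mul_one]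
  refine ⟨le_antisymm ?_ ?_, htop⟩
  · rw [Polynomial.natDegree_le_iff_coeff_eq_zero]
    intro N hN
    exact Lop_coeff_zero m f (by omega)
  · apply Polynomial.le_natDegree_of_ne_zero
    rw [htop]; exact hlc

lemma eq_C_of_deg (f : Polynomial ℝ) (h : ∀ j, 1 ≤ j → f.coeff j = 0) :
    f = C (f.coeff 0) := by
  ext j
  rcases Nat.eq_zero_or_pos j with hj | hj
  · simp [hj]
  · rw [h j hj, Polynomial.coeff_C, if_neg (by omega)]

lemma Lop_X_pow_coeff (m : ℕ → ℝ) (N j : ℕ) :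
    (Lop m (X ^ N : Polynomial ℝ)).coeff j = if j < N then m (N - 1 - j) else 0 := by
  rw [Lop_coeff, Polynomial.natDegree_X_pow]
  have : ∀ n ∈ Finset.Ioc j N, (X ^ N : Polynomial ℝ).coeff n * m (n - 1 - j)
      = if n = N then m (N - 1 - j) else 0 := by
    intro n _
    rw [Polynomial.coeff_X_pow]
    by_cases h : n = N <;> simp [h]
  rw [Finset.sum_congr rfl this, Finset.sum_ite_eq' (Finset.Ioc j N) N
    (fun _ => m (N - 1 - j))]
  simp [Finset.mem_Ioc]

lemma G_coeff (m w : ℕ → ℝ) (hm0 : m 0 = 1) (N j : ℕ) (hj : j < N) :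
    (Lop w (Lop m (X ^ N : Polynomial ℝ))).coeff j
      = ∑ i ∈ Finset.range (N - 1 - j), m i * w (N - 2 - j - i) := by
  have hnd : (Lop m (X ^ N : Polynomial ℝ)).natDegree = N - 1 := by
    refine (Lop_nd m hm0 (X ^ N) (by omega) (Polynomial.natDegree_X_pow N) ?_).1
    simp
  rw [Lop_coeff, hnd]
  have : ∀ k ∈ Finset.Ioc j (N - 1),
      (Lop m (X ^ N : Polynomial ℝ)).coeff k * w (k - 1 - j)
      = m (N - 1 - k) * w (k - 1 - j) := by
    intro k hk
    rw [Finset.mem_Ioc] at hk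
    rw [Lop_X_pow_coeff, if_pos (by omega)]
  rw [Finset.sum_congr rfl this]
  apply Finset.sum_nbij' (fun k => N - 1 - k) (fun i => N - 1 - i)
  · intro k hk; rw [Finset.mem_Ioc] at hk; rw [Finset.mem_range]; omega
  · intro i hi; rw [Finset.mem_range] at hi; rw [Finset.mem_Ioc]; omega
  · intro k hk; rw [Finset.mem_Ioc] at hk; omega
  · intro i hi; rw [Finset.mem_range] at hi; omega
  · intro k hk
    rw [Finset.mem_Ioc] at hk
    congr 2 <;> omega

lemma coeff_mul_top (p G : Polynomial ℝ) (n d : ℕ) (hd : d ≤ n)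
    (hp : ∀ i, d < i → p.coeff i = 0) (hG : ∀ j, n - d < j → G.coeff j = 0) :
    (p * G).coeff n = p.coeff d * G.coeff (n - d) := by
  rw [Polynomial.coeff_mul]
  apply Finset.sum_eq_single_of_mem (d, n - d) (Finset.HasAntidiagonal.mem_antidiagonal.2 (by omega))
  intro b hb hne
  rw [Finset.HasAntidiagonal.mem_antidiagonal] at hb
  rcases lt_or_ge d b.1 with h | h
  · rw [hp _ h, zero_mul]
  · by_cases h2 : n - d < b.2
    · rw [hG _ h2, mul_zero]
    · exfalso
      apply hne
      obtain ⟨x, y⟩ := b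
      simp only [Prod.mk.injEq]
      simp only at hb h h2
      omega


theorem stmt12 (μ ν : Measure ℝ) [IsProbabilityMeasure μ] [IsProbabilityMeasure ν]
    (hcsμ : CompactSupp μ) (hcsν : CompactSupp ν)
    (p q : Polynomial ℝ)
    (hQ : HasPolyEigenfunctions
      (fun f => p * Lop (mom ν) (Lop (mom μ) f) + q * Lop (mom μ) f)) :
    q.degree ≤ 1 ∧ p.degree ≤ 2 ∧
    (∀ n : ℕ, 1 ≤ n →
      p.coeff 0 * (∑ i ∈ Finset.range (n - 1), mom μ i * mom ν (n - 2 - i))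
      + p.coeff 1 * (∑ i ∈ Finset.range n, mom μ i * mom ν (n - 1 - i))
      + p.coeff 2 * (∑ i ∈ Finset.range (n + 1), mom μ i * mom ν (n - i))
      + q.coeff 0 * mom μ (n - 1) + q.coeff 1 * mom μ n = 0) ∧
    (PowerSeries.C (R := ℝ) (p.coeff 0) * PowerSeries.X ^ 2
        + PowerSeries.C (R := ℝ) (p.coeff 1) * PowerSeries.X + PowerSeries.C (R := ℝ) (p.coeff 2))
      * PowerSeries.mk (mom μ) * PowerSeries.mk (mom ν)
    + (PowerSeries.C (R := ℝ) (q.coeff 0) * PowerSeries.X + PowerSeries.C (R := ℝ) (q.coeff 1))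
      * PowerSeries.mk (mom μ)
    = PowerSeries.C (R := ℝ) (p.coeff 2 + q.coeff 1) := by
  
  classical
  have hm0 : mom μ 0 = 1 := by simp [mom]
  have hw0 : mom ν 0 = 1 := by simp [mom]
  set m := mom μ with hm
  set w := mom ν with hw
  obtain ⟨P, lam, hdeg, heig⟩ := hQ
  have heig' : ∀ n, p * Lop w (Lop m (P n)) + q * Lop m (P n) = lam n • P n := heig
  have hPnd : ∀ n, (P n).natDegree = n := fun n =>
    Polynomial.natDegree_eq_of_degree_eq_some (hdeg n)
  have hPlc : ∀ n, (P n).coeff n ≠ 0 := fun n =>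
    Polynomial.coeff_ne_zero_of_eq_degree (hdeg n)
  -- q has degree ≤ 1
  have hH1 : Lop m (P 1) = C ((P 1).coeff 1) := by
    obtain ⟨hnd1, hc1⟩ := Lop_nd m hm0 (P 1) le_rfl (hPnd 1) (hPlc 1)
    rw [eq_C_of_deg (Lop m (P 1)) (fun j hj => Lop_coeff_zero m (P 1) (by rw [hPnd]; omega))]
    rw [show (Lop m (P 1)).coeff 0 = (P 1).coeff 1 from hc1]
  have hq1 : q * C ((P 1).coeff 1) = lam 1 • P 1 := by
    have h := heig' 1
    rw [hH1, Lop_eq_zero w _ (Polynomial.natDegree_C _), mul_zero, zero_add] at h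
    exact h
  have hqeq : q = (lam 1 • P 1) * C ((P 1).coeff 1)⁻¹ := by
    rw [← hq1, mul_assoc, ← Polynomial.C_mul, mul_inv_cancel₀ (hPlc 1),
      Polynomial.C_1, mul_one]
  have hqdeg : q.degree ≤ 1 := by
    rw [hqeq]
    refine le_trans (Polynomial.degree_mul_le _ _) ?_
    refine le_trans (add_le_add (le_trans (Polynomial.degree_smul_le _ _) (hdeg 1).le)
      Polynomial.degree_C_le) ?_
    simp
  have hqc : ∀ j, 2 ≤ j → q.coeff j = 0 := by
    intro j hj
    refine Polynomial.coeff_eq_zero_of_degree_lt (lt_of_le_of_lt hqdeg ?_)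
    exact_mod_cast (by omega : (1:ℕ) < j)
  -- p has degree ≤ 2
  obtain ⟨hnd2, hc2⟩ := Lop_nd m hm0 (P 2) (by omega) (hPnd 2) (hPlc 2)
  have hG2 : Lop w (Lop m (P 2)) = C ((P 2).coeff 2) := by
    obtain ⟨hnd2', hc2'⟩ := Lop_nd w hw0 (Lop m (P 2)) le_rfl hnd2
      (by rw [hc2]; exact hPlc 2)
    rw [eq_C_of_deg (Lop w (Lop m (P 2))) (fun j hj => Lop_coeff_zero w _ (by omega))]
    rw [show (Lop w (Lop m (P 2))).coeff 0 = (Lop m (P 2)).coeff 1 from hc2', hc2]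
  have hp2 : p * C ((P 2).coeff 2) = lam 2 • P 2 - q * Lop m (P 2) := by
    have h := heig' 2
    rw [hG2] at h
    linear_combination h
  have hpeq : p = (lam 2 • P 2 - q * Lop m (P 2)) * C ((P 2).coeff 2)⁻¹ := by
    rw [← hp2, mul_assoc, ← Polynomial.C_mul, mul_inv_cancel₀ (hPlc 2),
      Polynomial.C_1, mul_one]
  have hpdeg : p.degree ≤ 2 := by
    have hLdeg : (Lop m (P 2)).degree ≤ 1 := by
      refine le_trans Polynomial.degree_le_natDegree ?_
      rw [hnd2]
      exact_mod_cast le_refl 1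
    have hd1 : (lam 2 • P 2 - q * Lop m (P 2)).degree ≤ 2 := by
      refine le_trans (Polynomial.degree_sub_le _ _) (max_le ?_ ?_)
      · refine le_trans (Polynomial.degree_smul_le _ _) ?_
        rw [hdeg 2]
        exact_mod_cast le_refl 2
      · refine le_trans (Polynomial.degree_mul_le _ _) ?_
        calc q.degree + (Lop m (P 2)).degree ≤ 1 + 1 := add_le_add hqdeg hLdeg
          _ = 2 := by decide
    rw [hpeq]
    refine le_trans (Polynomial.degree_mul_le _ _) ?_
    calc (lam 2 • P 2 - q * Lop m (P 2)).degree + (C ((P 2).coeff 2)⁻¹).degree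
        ≤ 2 + 0 := add_le_add hd1 Polynomial.degree_C_le
      _ = 2 := by decide
  have hpc : ∀ i, 3 ≤ i → p.coeff i = 0 := by
    intro i hi
    refine Polynomial.coeff_eq_zero_of_degree_lt (lt_of_le_of_lt hpdeg ?_)
    exact_mod_cast (by omega : (2:ℕ) < i)
  -- the eigenvalues for n ≥ 2
  have hlam : ∀ n, 2 ≤ n → lam n = p.coeff 2 + q.coeff 1 := by
    intro n hn
    obtain ⟨hndH, hcH⟩ := Lop_nd m hm0 (P n) (by omega) (hPnd n) (hPlc n)
    obtain ⟨hndG, hcG⟩ := Lop_nd w hw0 (Lop m (P n)) (by omega) hndH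
      (by rw [hcH]; exact hPlc n)
    have h := congrArg (fun f => Polynomial.coeff f n) (heig' n)
    simp only [Polynomial.coeff_add, Polynomial.coeff_smul, smul_eq_mul] at h
    rw [coeff_mul_top p _ n 2 (by omega) (fun i hi => hpc i (by omega))
      (fun j hj => Polynomial.coeff_eq_zero_of_natDegree_lt (by rw [hndG]; omega))] at h
    rw [coeff_mul_top q _ n 1 (by omega) (fun i hi => hqc i (by omega))
      (fun j hj => Polynomial.coeff_eq_zero_of_natDegree_lt (by rw [hndH]; omega))] at h
    rw [show n - 1 - 1 = n - 2 from by omega] at hcG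
    rw [show (Lop w (Lop m (P n))).coeff (n - 2) = (P n).coeff n from hcG ▸ hcH ▸ rfl] at h
    rw [hcH] at h
    -- h : p.coeff 2 * (P n).coeff n + q.coeff 1 * (P n).coeff n = lam n * (P n).coeff n
    have := mul_right_cancel₀ (hPlc n) (show (p.coeff 2 + q.coeff 1) * (P n).coeff n
      = lam n * (P n).coeff n by linear_combination h)
    linarith [this]


  -- the key degree bound
  have hkey : ∀ f : Polynomial ℝ,
      (p * Lop w (Lop m f) + q * Lop m f - (p.coeff 2 + q.coeff 1) • f).degree ≤ 1 := by
    have hlow : ∀ f : Polynomial ℝ, f.natDegree ≤ 1 →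
        (p * Lop w (Lop m f) + q * Lop m f - (p.coeff 2 + q.coeff 1) • f).degree ≤ 1 := by
      intro f hf
      have hL0 : (Lop m f).natDegree = 0 := by
        refine Nat.le_zero.mp ?_
        rw [Polynomial.natDegree_le_iff_coeff_eq_zero]
        intro N hN
        exact Lop_coeff_zero m f (by omega)
      have hLL : Lop w (Lop m f) = 0 := Lop_eq_zero w _ hL0
      rw [hLL, mul_zero, zero_add]
      refine le_trans (Polynomial.degree_sub_le _ _) (max_le ?_ ?_)
      · refine le_trans (Polynomial.degree_mul_le _ _) ?_
        calc q.degree + (Lop m f).degree ≤ 1 + 0 := by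
              refine add_le_add hqdeg ?_
              refine le_trans Polynomial.degree_le_natDegree ?_
              rw [hL0]
              exact_mod_cast le_refl 0
          _ = 1 := by decide
      · refine le_trans (Polynomial.degree_smul_le _ _) ?_
        exact Polynomial.natDegree_le_iff_degree_le.mp hf
    suffices h : ∀ (N : ℕ) (f : Polynomial ℝ), f.natDegree ≤ N →
        (p * Lop w (Lop m f) + q * Lop m f - (p.coeff 2 + q.coeff 1) • f).degree ≤ 1 by
      exact fun f => h f.natDegree f le_rfl
    intro N
    induction N with
    | zero => exact fun f hf => hlow f (by omega)
    | succ N ih =>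
      intro f hf
      rcases le_or_gt f.natDegree N with hle | hgt
      · exact ih f hle
      have hfn : f.natDegree = N + 1 := by omega
      rcases le_or_gt (N + 1) 1 with hN1 | hN1
      · exact hlow f (by omega)
      -- peel off P (N+1)
      set n : ℕ := N + 1 with hn
      set r : ℝ := f.coeff n * ((P n).coeff n)⁻¹ with hr
      set g : Polynomial ℝ := f - C r * P n with hg'
      have hgc : ∀ j, N < j → g.coeff j = 0 := by
        intro j hj
        rw [hg', Polynomial.coeff_sub, Polynomial.coeff_C_mul]
        rcases eq_or_lt_of_le (show n ≤ j by omega) with hj' | hj'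
        · rw [← hj', hr, inv_mul_cancel_right₀ (hPlc n), sub_self]
        · rw [Polynomial.coeff_eq_zero_of_natDegree_lt (by omega : f.natDegree < j),
            Polynomial.coeff_eq_zero_of_natDegree_lt (by rw [hPnd]; omega), mul_zero,
            sub_zero]
      have hgnd : g.natDegree ≤ N := by
        rw [Polynomial.natDegree_le_iff_coeff_eq_zero]
        exact hgc
      have hfg : f = C r * P n + g := by rw [hg']; ring
      have hPQ : p * Lop w (Lop m (P n)) + q * Lop m (P n)
          = (p.coeff 2 + q.coeff 1) • P n := by
        rw [heig' n, hlam n (by omega)]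
      have hrw : p * Lop w (Lop m f) + q * Lop m f - (p.coeff 2 + q.coeff 1) • f
          = p * Lop w (Lop m g) + q * Lop m g - (p.coeff 2 + q.coeff 1) • g := by
        conv_lhs => rw [hfg]
        rw [Lop_add, Lop_C_mul, Lop_add, Lop_C_mul]
        simp only [Polynomial.smul_eq_C_mul] at hPQ ⊢
        linear_combination (C r : Polynomial ℝ) * hPQ
      rw [hrw]
      exact ih g hgnd
  -- the moment identity
  have hmain : ∀ n : ℕ, 1 ≤ n →
      p.coeff 0 * (∑ i ∈ Finset.range (n - 1), m i * w (n - 2 - i))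
      + p.coeff 1 * (∑ i ∈ Finset.range n, m i * w (n - 1 - i))
      + p.coeff 2 * (∑ i ∈ Finset.range (n + 1), m i * w (n - i))
      + q.coeff 0 * m (n - 1) + q.coeff 1 * m n = 0 := by
    intro n hn
    have h2 := hkey (X ^ (n + 2))
    have hc : (p * Lop w (Lop m (X ^ (n + 2))) + q * Lop m (X ^ (n + 2))
        - (p.coeff 2 + q.coeff 1) • (X ^ (n + 2) : Polynomial ℝ)).coeff 2 = 0 :=
      Polynomial.coeff_eq_zero_of_degree_lt
        (lt_of_le_of_lt h2 (by exact_mod_cast (by omega : (1:ℕ) < 2)))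
    simp only [Polynomial.coeff_sub, Polynomial.coeff_add, Polynomial.coeff_smul,
      smul_eq_mul, Polynomial.coeff_X_pow] at hc
    rw [if_neg (by omega : ¬ (2:ℕ) = n + 2), mul_zero, sub_zero] at hc
    rw [Polynomial.coeff_mul, Polynomial.coeff_mul,
      Finset.Nat.sum_antidiagonal_eq_sum_range_succ_mk,
      Finset.Nat.sum_antidiagonal_eq_sum_range_succ_mk] at hc
    simp only [Finset.sum_range_succ, Finset.sum_range_zero, zero_add] at hc
    norm_num at hc
    rw [G_coeff m w hm0 (n + 2) 2 (by omega), G_coeff m w hm0 (n + 2) 1 (by omega),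
      G_coeff m w hm0 (n + 2) 0 (by omega),
      Lop_X_pow_coeff m (n + 2) 2, Lop_X_pow_coeff m (n + 2) 1,
      Lop_X_pow_coeff m (n + 2) 0,
      if_pos (by omega : (2:ℕ) < n + 2), if_pos (by omega : (1:ℕ) < n + 2),
      if_pos (by omega : (0:ℕ) < n + 2)] at hc
    rw [show n + 2 - 1 - 2 = n - 1 from by omega, show n + 2 - 2 - 2 = n - 2 from by omega,
      show n + 2 - 1 - 1 = n from by omega, show n + 2 - 2 - 1 = n - 1 from by omega,
      show n + 2 - 1 - 0 = n + 1 from by omega, show n + 2 - 2 - 0 = n from by omega]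
      at hc
    rw [hqc 2 le_rfl] at hc
    linarith [hc]
  refine ⟨hqdeg, hpdeg, hmain, ?_⟩
  -- power series identity
  have hAB : ∀ k : ℕ, (PowerSeries.coeff (R := ℝ) k) (PowerSeries.mk m * PowerSeries.mk w)
      = ∑ i ∈ Finset.range (k + 1), m i * w (k - i) := by
    intro k
    rw [PowerSeries.coeff_mul, Finset.Nat.sum_antidiagonal_eq_sum_range_succ_mk]
    simp [PowerSeries.coeff_mk]
  rw [show (PowerSeries.C (R := ℝ) (p.coeff 0) * PowerSeries.X ^ 2
        + PowerSeries.C (R := ℝ) (p.coeff 1) * PowerSeries.X + PowerSeries.C (R := ℝ) (p.coeff 2))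
      * PowerSeries.mk m * PowerSeries.mk w
    + (PowerSeries.C (R := ℝ) (q.coeff 0) * PowerSeries.X + PowerSeries.C (R := ℝ) (q.coeff 1))
      * PowerSeries.mk m
    = PowerSeries.C (R := ℝ) (p.coeff 0) * (PowerSeries.X ^ 2 * (PowerSeries.mk m * PowerSeries.mk w))
      + PowerSeries.C (R := ℝ) (p.coeff 1) * (PowerSeries.X ^ 1 * (PowerSeries.mk m * PowerSeries.mk w))
      + PowerSeries.C (R := ℝ) (p.coeff 2) * (PowerSeries.mk m * PowerSeries.mk w)
      + PowerSeries.C (R := ℝ) (q.coeff 0) * (PowerSeries.X ^ 1 * PowerSeries.mk m)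
      + PowerSeries.C (R := ℝ) (q.coeff 1) * PowerSeries.mk m from by ring]
  ext k
  simp only [map_add, PowerSeries.coeff_C_mul, PowerSeries.coeff_X_pow_mul',
    PowerSeries.coeff_mk, PowerSeries.coeff_C, hAB]
  rcases Nat.eq_zero_or_pos k with hk | hk
  · subst hk
    norm_num [hm0, hw0]
  · simp only [if_neg (by omega : ¬ k = 0)]
    have hM := hmain k hk
    rcases eq_or_lt_of_le (show 1 ≤ k from hk) with hk1 | hk2
    · -- k = 1
      rw [← hk1] at hM ⊢
      norm_num at hM ⊢
      linarith [hM]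
    · -- k ≥ 2
      rw [if_pos (by omega : 2 ≤ k), if_pos (by omega : 1 ≤ k), if_pos (by omega : 1 ≤ k)]
      rw [show k - 2 + 1 = k - 1 from by omega, show k - 1 + 1 = k from by omega]
      linarith [hM]
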